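/- Let V be a finite-dimensional real inner product space. The matrix exponential, restricted to the space of symmetric endomorphisms of V, is a bijection onto the set of positive-definite symmetric endomorphisms of V. -/

import Mathlib

open scoped RealInnerProductSpace

section Aux
open FiniteDimensional

variable {V : Type*} [NormedAddCommGroup V] [InnerProductSpace ℝ V] [FiniteDimensional ℝ V]

lemma exp_apply_eigen (S : V →L[ℝ] V) {v : V} {μ : ℝ} (h : S v = μ • v) :
    NormedSpace.exp S v = Real.exp μ • v := by
  have hpow : ∀ n : ℕ, (S ^ n) v = μ ^ n • v := by
    intro n
    induction n with
    | zero => simp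
    | succ n ih =>
      rw [pow_succ, ContinuousLinearMap.mul_apply, h, map_smul, ih, smul_smul, pow_succ]
      ring_nf
  have hsum : Summable fun n : ℕ => ((n.factorial : ℝ)⁻¹) • S ^ n :=
    NormedSpace.expSeries_summable' (𝕂 := ℝ) S
  calc NormedSpace.exp S v
      = (∑' n : ℕ, ((n.factorial : ℝ)⁻¹) • S ^ n) v := by rw [NormedSpace.exp_eq_tsum ℝ]
    _ = ∑' n : ℕ, (((n.factorial : ℝ)⁻¹) • S ^ n) v := by
        exact (ContinuousLinearMap.apply ℝ V v).map_tsum hsum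
    _ = ∑' n : ℕ, ((n.factorial : ℝ)⁻¹ * μ ^ n) • v := by
        refine tsum_congr fun n => ?_
        simp [hpow n, smul_smul]
    _ = (∑' n : ℕ, (n.factorial : ℝ)⁻¹ * μ ^ n) • v := by
        refine Summable.tsum_smul_const ?_ v
        simpa [smul_eq_mul] using NormedSpace.expSeries_summable' (𝕂 := ℝ) μ
    _ = Real.exp μ • v := by
        congr 1
        rw [Real.exp_eq_exp_ℝ, NormedSpace.exp_eq_tsum ℝ]
        simp [smul_eq_mul]

lemma exp_symm {S : V →L[ℝ] V} (hS : ∀ x y : V, ⟪S x, y⟫ = ⟪x, S y⟫) :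
    ∀ x y : V, ⟪NormedSpace.exp S x, y⟫ = ⟪x, NormedSpace.exp S y⟫ := by
  have h1 : IsSelfAdjoint S := ContinuousLinearMap.isSelfAdjoint_iff_isSymmetric.2 hS
  have h2 : IsSelfAdjoint (NormedSpace.exp S) := h1.exp
  exact ContinuousLinearMap.isSelfAdjoint_iff_isSymmetric.1 h2

lemma exp_apply_ne_zero (S : V →L[ℝ] V) {x : V} (hx : x ≠ 0) :
    NormedSpace.exp S x ≠ 0 := by
  intro h0
  apply hx
  have h1 : NormedSpace.exp (-S) * NormedSpace.exp S = 1 := by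
    letI : NormedAlgebra ℚ (V →L[ℝ] V) := .restrictScalars ℚ ℝ _
    rw [← NormedSpace.exp_add_of_commute ((Commute.refl S).neg_left), neg_add_cancel,
      NormedSpace.exp_zero]
  calc x = (NormedSpace.exp (-S) * NormedSpace.exp S) x := by rw [h1]; rfl
    _ = NormedSpace.exp (-S) (NormedSpace.exp S x) := rfl
    _ = 0 := by rw [h0, map_zero]

lemma exp_posDef {S : V →L[ℝ] V} (hS : ∀ x y : V, ⟪S x, y⟫ = ⟪x, S y⟫) {x : V} (hx : x ≠ 0) :
    0 < ⟪NormedSpace.exp S x, x⟫ := by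
  have hhalf : ∀ x y : V, ⟪((1/2 : ℝ) • S) x, y⟫ = ⟪x, ((1/2 : ℝ) • S) y⟫ := by
    intro x y
    simp only [ContinuousLinearMap.smul_apply, real_inner_smul_left, real_inner_smul_right, hS]
  have hsplit : NormedSpace.exp S =
      NormedSpace.exp ((1/2 : ℝ) • S) * NormedSpace.exp ((1/2 : ℝ) • S) := by
    letI : NormedAlgebra ℚ (V →L[ℝ] V) := .restrictScalars ℚ ℝ _
    rw [← NormedSpace.exp_add_of_commute (Commute.refl _)]
    congr 1
    rw [← add_smul]
    norm_num
  set A := NormedSpace.exp ((1/2 : ℝ) • S)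
  have hAx : A x ≠ 0 := exp_apply_ne_zero _ hx
  have hA := exp_symm hhalf
  have hpos : (0 : ℝ) < ⟪A x, A x⟫ := by
    have hne : ⟪A x, A x⟫ ≠ (0 : ℝ) := fun h => hAx (inner_self_eq_zero.mp h)
    exact lt_of_le_of_ne real_inner_self_nonneg (Ne.symm hne)
  calc (0 : ℝ) < ⟪A x, A x⟫ := hpos
    _ = ⟪A (A x), x⟫ := (hA (A x) x).symm
    _ = ⟪NormedSpace.exp S x, x⟫ := by rw [hsplit]; rfl

lemma eigen_of_exp_eigen {S : V →L[ℝ] V} (hS : ∀ x y : V, ⟪S x, y⟫ = ⟪x, S y⟫) {v : V} {μ : ℝ}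
    (h : NormedSpace.exp S v = Real.exp μ • v) : S v = μ • v := by
  have hS' : (S : V →ₗ[ℝ] V).IsSymmetric := fun x y => hS x y
  have hrank : Module.finrank ℝ V = Module.finrank ℝ V := rfl
  set b := hS'.eigenvectorBasis hrank with hb
  set lam := hS'.eigenvalues hrank with hlam
  have heig : ∀ i, S (b i) = lam i • b i := by
    intro i
    exact hS'.apply_eigenvectorBasis hrank i
  have hkey : ∀ i, Real.exp (lam i) * ⟪b i, v⟫ = Real.exp μ * ⟪b i, v⟫ := by
    intro i
    have h1 : ⟪NormedSpace.exp S (b i), v⟫ = ⟪b i, NormedSpace.exp S v⟫ := exp_symm hS _ _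
    rw [exp_apply_eigen S (heig i), h, real_inner_smul_left, real_inner_smul_right] at h1
    exact h1
  have hcoeff : ∀ i, ⟪b i, v⟫ * lam i = ⟪b i, v⟫ * μ := by
    intro i
    rcases eq_or_ne (⟪b i, v⟫ : ℝ) 0 with hc | hc
    · rw [hc, zero_mul, zero_mul]
    · have h2 : Real.exp (lam i) = Real.exp μ := by
        have hkey' : Real.exp (lam i) * ⟪b i, v⟫ = Real.exp μ * ⟪b i, v⟫ := hkey i
        exact mul_right_cancel₀ hc hkey'
      rw [Real.exp_injective h2]
  conv_lhs => rw [← b.sum_repr' v]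
  conv_rhs => rw [← b.sum_repr' v]
  rw [map_sum, Finset.smul_sum]
  refine Finset.sum_congr rfl fun i _ => ?_
  rw [map_smul, heig i, smul_smul, smul_smul, hcoeff i, mul_comm]

lemma exp_surj {P : V →L[ℝ] V} (hP : ∀ x y : V, ⟪P x, y⟫ = ⟪x, P y⟫)
    (hPd : ∀ x : V, x ≠ 0 → 0 < ⟪P x, x⟫) :
    ∃ S : V →L[ℝ] V, (∀ x y : V, ⟪S x, y⟫ = ⟪x, S y⟫) ∧ NormedSpace.exp S = P := by
  have hP' : (P : V →ₗ[ℝ] V).IsSymmetric := fun x y => hP x y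
  have hrank : Module.finrank ℝ V = Module.finrank ℝ V := rfl
  set b := hP'.eigenvectorBasis hrank with hb
  set g := hP'.eigenvalues hrank with hg
  have heig : ∀ i, P (b i) = g i • b i := fun i => hP'.apply_eigenvectorBasis hrank i
  have hbnorm : ∀ i, ⟪b i, b i⟫ = (1 : ℝ) := by
    intro i
    rw [real_inner_self_eq_norm_sq, b.orthonormal.1 i]
    norm_num
  have hbne : ∀ i, b i ≠ 0 := fun i => by
    intro h0
    have := hbnorm i
    rw [h0] at this
    simp at this
  have hgpos : ∀ i, 0 < g i := by
    intro i
    have := hPd (b i) (hbne i)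
    rwa [heig i, real_inner_smul_left, hbnorm i, mul_one] at this
  set S : V →L[ℝ] V :=
    ∑ i, Real.log (g i) • ((innerSL ℝ (b i)).smulRight (b i)) with hSdef
  have hSapply : ∀ x, S x = ∑ i, (Real.log (g i) * ⟪b i, x⟫) • b i := by
    intro x
    rw [hSdef]
    simp [ContinuousLinearMap.sum_apply, mul_smul]
  have hSsymm : ∀ x y : V, ⟪S x, y⟫ = ⟪x, S y⟫ := by
    intro x y
    rw [hSapply, hSapply, sum_inner, inner_sum]
    refine Finset.sum_congr rfl fun i _ => ?_
    rw [real_inner_smul_left, real_inner_smul_right]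
    ring_nf
    rw [real_inner_comm (b i) x]
    ring
  have hortho : ∀ i j, ⟪b i, b j⟫ = if i = j then (1 : ℝ) else 0 :=
    orthonormal_iff_ite.mp b.orthonormal
  have hSb : ∀ j, S (b j) = Real.log (g j) • b j := by
    intro j
    rw [hSapply]
    rw [Finset.sum_eq_single j]
    · rw [hortho j j]
      simp
    · intro i _ hij
      rw [hortho i j, if_neg hij]
      simp
    · intro hj
      exact absurd (Finset.mem_univ j) hj
  refine ⟨S, hSsymm, ?_⟩
  have hexpb : ∀ j, NormedSpace.exp S (b j) = P (b j) := by
    intro j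
    rw [exp_apply_eigen S (hSb j), Real.exp_log (hgpos j), heig j]
  apply ContinuousLinearMap.coe_injective
  apply Module.Basis.ext b.toBasis
  intro j
  simpa using hexpb j


end Aux

/-- The exponential of endomorphisms, restricted to symmetric endomorphisms of a
finite-dimensional real inner product space, is a bijection onto the
positive-definite symmetric endomorphisms. -/
theorem exp_bijOn_symmetric_posDef
    (V : Type*) [NormedAddCommGroup V] [InnerProductSpace ℝ V] [FiniteDimensional ℝ V] :
    Set.BijOn (NormedSpace.exp)
      {S : V →L[ℝ] V | ∀ x y : V, ⟪S x, y⟫ = ⟪x, S y⟫}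
      {S : V →L[ℝ] V | (∀ x y : V, ⟪S x, y⟫ = ⟪x, S y⟫) ∧
        ∀ x : V, x ≠ 0 → 0 < ⟪S x, x⟫} := by
  refine ⟨fun S hS => ⟨exp_symm hS, fun x hx => exp_posDef hS hx⟩, ?_, ?_⟩
  · intro S hS T hT heq
    have hT' : (T : V →ₗ[ℝ] V).IsSymmetric := fun x y => hT x y
    have hrank : Module.finrank ℝ V = Module.finrank ℝ V := rfl
    set b := hT'.eigenvectorBasis hrank with hb
    set lam := hT'.eigenvalues hrank with hlam
    have heig : ∀ i, T (b i) = lam i • b i := fun i => hT'.apply_eigenvectorBasis hrank i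
    apply ContinuousLinearMap.coe_injective
    apply Module.Basis.ext b.toBasis
    intro j
    have h1 : NormedSpace.exp S (b j) = Real.exp (lam j) • b j := by
      rw [heq, exp_apply_eigen T (heig j)]
    have h2 : S (b j) = lam j • b j := eigen_of_exp_eigen hS h1
    simp only [OrthonormalBasis.coe_toBasis, ContinuousLinearMap.coe_coe]
    rw [h2, heig j]
  · rintro P ⟨hP, hPd⟩
    obtain ⟨S, hSsym, hexp⟩ := exp_surj hP hPd
    exact ⟨S, hSsym, hexp⟩
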